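/- (Appendix C, inequality (C.3).) For every real θ > 1, the series ∑_{n=2}^{∞} (log n)² · n^{−θ} converges and satisfies ∑_{n=2}^{∞} (log n)² · n^{−θ} < (log 2)²/(θ−1) + (2/(θ−1)) · [ (log 2 + 1)/(θ−1)² + log 2 ]. -/

import Mathlib

/-- Appendix C, inequality (C.3): for `θ > 1`, the series
`∑_{n=2}^∞ (log n)²·n^{−θ}` (which equals `Z''(θ)`) converges and is
`< (log 2)²/(θ−1) + (2/(θ−1))·[(log 2 + 1)/(θ−1)² + log 2]`. -/
theorem stmt_18 (θ : ℝ) (hθ : 1 < θ) :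
    Summable (fun n : ℕ => Real.log ((n : ℝ) + 2) ^ 2 * ((n : ℝ) + 2) ^ (-θ)) ∧
      ∑' n : ℕ, Real.log ((n : ℝ) + 2) ^ 2 * ((n : ℝ) + 2) ^ (-θ) <
        Real.log 2 ^ 2 / (θ - 1) +
          (2 / (θ - 1)) * ((Real.log 2 + 1) / (θ - 1) ^ 2 + Real.log 2) := by
  have hl : 0 < Real.log 2 := Real.log_pos one_lt_two
  have hu : 0 < θ - 1 := by linarith
  set l : ℝ := Real.log 2 with hl_def
  set u : ℝ := θ - 1 with hu_def
  set G : ℝ → ℝ := fun x => x ^ (1 - θ) *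
      ((Real.log x + l) ^ 2 / u + 2 * (Real.log x + l) / u ^ 2 + 2 / u ^ 3) with hG_def
  -- derivative of -G is the majorant g
  have hderiv : ∀ x : ℝ, 0 < x →
      HasDerivAt (fun y => -G y) ((Real.log x + l) ^ 2 * x ^ (-θ)) x := by
    intro x hx
    have hx' : x ≠ 0 := ne_of_gt hx
    have h1 : HasDerivAt (fun y : ℝ => y ^ (1 - θ)) ((1 - θ) * x ^ (1 - θ - 1)) x :=
      Real.hasDerivAt_rpow_const (Or.inl hx')
    have hlog : HasDerivAt (fun y : ℝ => Real.log y + l) x⁻¹ x :=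
      (Real.hasDerivAt_log hx').add_const l
    have hA : HasDerivAt (fun y : ℝ =>
        (Real.log y + l) ^ 2 / u + 2 * (Real.log y + l) / u ^ 2 + 2 / u ^ 3)
        ((↑2 * (Real.log x + l) ^ 1 * x⁻¹) / u + (2 * x⁻¹) / u ^ 2) x := by
      have h2 : HasDerivAt (fun y : ℝ => (Real.log y + l) ^ 2)
          (↑2 * (Real.log x + l) ^ 1 * x⁻¹) x := hlog.pow 2
      have h3 : HasDerivAt (fun y : ℝ => 2 * (Real.log y + l)) (2 * x⁻¹) x :=
        hlog.const_mul 2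
      simpa using ((h2.div_const u).add (h3.div_const (u ^ 2))).add_const (2 / u ^ 3)
    have := (h1.mul hA).neg
    convert this using 1
    · rfl
    · rfl
    · rfl
    have e1 : x ^ (1 - θ - 1) = x ^ (-θ) := by norm_num
    have e2 : x ^ (1 - θ) = x ^ (-θ) * x := by
      rw [show (1 - θ) = -θ + 1 by ring, Real.rpow_add_one hx']
    rw [e1, e2]
    field_simp
    ring
  have hGnonneg : ∀ x : ℝ, 1 ≤ x → 0 ≤ G x := by
    intro x hx
    have hlx : 0 ≤ Real.log x := Real.log_nonneg hx
    have : (0:ℝ) ≤ x ^ (1 - θ) := Real.rpow_nonneg (by linarith) _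
    have h1 : 0 ≤ (Real.log x + l) ^ 2 / u := by positivity
    have h2 : 0 ≤ 2 * (Real.log x + l) / u ^ 2 := by positivity
    have h3 : 0 ≤ 2 / u ^ 3 := by positivity
    exact mul_nonneg this (by linarith)
  -- the per-term key bound
  have key : ∀ a : ℝ, 2 ≤ a → Real.log a ^ 2 * a ^ (-θ) ≤ G (a - 1) - G a := by
    intro a ha
    have ha1 : (0:ℝ) < a - 1 := by linarith
    have hab : a - 1 ≤ a := by linarith
    have hicc : Set.uIcc (a - 1) a = Set.Icc (a - 1) a := Set.uIcc_of_le hab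
    have hposIcc : ∀ x ∈ Set.Icc (a - 1) a, (0:ℝ) < x := fun x hx => lt_of_lt_of_le ha1 hx.1
    have hcont : ContinuousOn (fun x : ℝ => (Real.log x + l) ^ 2 * x ^ (-θ))
        (Set.Icc (a - 1) a) := by
      apply ContinuousOn.mul
      · exact (((Real.continuousOn_log.mono (fun x hx => ne_of_gt (hposIcc x hx))).add
          continuousOn_const).pow 2)
      · exact ContinuousOn.rpow_const continuousOn_id
          (fun x hx => Or.inl (ne_of_gt (hposIcc x hx)))
    have hint : IntervalIntegrable (fun x : ℝ => (Real.log x + l) ^ 2 * x ^ (-θ))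
        MeasureTheory.volume (a - 1) a := by
      apply ContinuousOn.intervalIntegrable
      rwa [hicc]
    have hftc : ∫ x in (a - 1)..a, (Real.log x + l) ^ 2 * x ^ (-θ) =
        (-G a) - (-G (a - 1)) := by
      apply intervalIntegral.integral_eq_sub_of_hasDerivAt
      · intro x hx
        rw [hicc] at hx
        exact hderiv x (hposIcc x hx)
      · exact hint
    have hlower : Real.log a ^ 2 * a ^ (-θ) ≤
        ∫ x in (a - 1)..a, (Real.log x + l) ^ 2 * x ^ (-θ) := by
      have hconst : ∫ _x in (a - 1)..a, Real.log a ^ 2 * a ^ (-θ) =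
          Real.log a ^ 2 * a ^ (-θ) := by
        simp [intervalIntegral.integral_const]
      rw [← hconst]
      apply intervalIntegral.integral_mono_on hab intervalIntegrable_const hint
      intro x hx
      have hx0 : 0 < x := hposIcc x hx
      have ha2x : a ≤ 2 * x := by
        have := hx.1; linarith
      have hla : Real.log a ≤ Real.log x + l := by
        have := Real.log_le_log (by linarith : (0:ℝ) < a) ha2x
        rwa [Real.log_mul (by norm_num) (ne_of_gt hx0), add_comm] at this
      have hla0 : 0 ≤ Real.log a := Real.log_nonneg (by linarith)
      have hsq : Real.log a ^ 2 ≤ (Real.log x + l) ^ 2 := by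
        apply pow_le_pow_left₀ hla0 hla
      have hr : a ^ (-θ) ≤ x ^ (-θ) :=
        Real.rpow_le_rpow_of_nonpos hx0 hx.2 (by linarith)
      exact mul_le_mul hsq hr (Real.rpow_nonneg (by linarith) _) (by positivity)
    linarith [hftc ▸ hlower]
  -- per-term bound in the ℕ-indexed form
  have keyn : ∀ k : ℕ, Real.log ((k : ℝ) + 2) ^ 2 * ((k : ℝ) + 2) ^ (-θ) ≤
      G ((k : ℝ) + 1) - G ((k : ℝ) + 2) := by
    intro k
    have := key ((k : ℝ) + 2) (by linarith [Nat.cast_nonneg (α := ℝ) k])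
    have e : ((k : ℝ) + 2) - 1 = (k : ℝ) + 1 := by ring
    rwa [e] at this
  -- partial sums bounded by G 1
  have hpartial : ∀ N : ℕ, ∑ k ∈ Finset.range N,
      Real.log ((k : ℝ) + 2) ^ 2 * ((k : ℝ) + 2) ^ (-θ) ≤ G 1 := by
    intro N
    have h1 : ∑ k ∈ Finset.range N, Real.log ((k : ℝ) + 2) ^ 2 * ((k : ℝ) + 2) ^ (-θ) ≤
        ∑ k ∈ Finset.range N, (G ((k : ℝ) + 1) - G ((k : ℝ) + 2)) :=
      Finset.sum_le_sum fun k _ => keyn k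
    have h2 : ∑ k ∈ Finset.range N, (G ((k : ℝ) + 1) - G ((k : ℝ) + 2)) =
        G 1 - G ((N : ℝ) + 1) := by
      have := Finset.sum_range_sub' (fun i : ℕ => G ((i : ℝ) + 1)) N
      push_cast at this
      norm_num at this
      rw [← this, Finset.sum_sub_distrib]
      congr 1
      exact Finset.sum_congr rfl fun k _ => by congr 1; ring
    have h3 : 0 ≤ G ((N : ℝ) + 1) := hGnonneg _ (by linarith [Nat.cast_nonneg (α := ℝ) N])
    calc ∑ k ∈ Finset.range N, Real.log ((k : ℝ) + 2) ^ 2 * ((k : ℝ) + 2) ^ (-θ)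
        ≤ G 1 - G ((N : ℝ) + 1) := h1.trans (le_of_eq h2)
      _ ≤ G 1 := by linarith
  have hnonneg : ∀ k : ℕ, 0 ≤ Real.log ((k : ℝ) + 2) ^ 2 * ((k : ℝ) + 2) ^ (-θ) :=
    fun k => mul_nonneg (sq_nonneg _) (Real.rpow_nonneg (by positivity) _)
  have hsummable := summable_of_sum_range_le hnonneg hpartial
  refine ⟨hsummable, lt_of_le_of_lt (Real.tsum_le_of_sum_range_le hnonneg hpartial) ?_⟩
  -- evaluate G 1 and compare with the target
  have hG1 : G 1 = l ^ 2 / u + 2 * l / u ^ 2 + 2 / u ^ 3 := by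
    simp [hG_def, Real.log_one, Real.one_rpow]
  rw [hG1]
  have hsub : (l ^ 2 / u + 2 / u * ((l + 1) / u ^ 2 + l)) -
      (l ^ 2 / u + 2 * l / u ^ 2 + 2 / u ^ 3) = 2 * l * (u ^ 2 - u + 1) / u ^ 3 := by
    field_simp
    ring
  have hq : 0 < u ^ 2 - u + 1 := by nlinarith
  have hpos : 0 < 2 * l * (u ^ 2 - u + 1) / u ^ 3 :=
    div_pos (by positivity) (by positivity)
  linarith
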